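/- arXiv:1608.04858 — 2 statements merged into one kernel-verified Lean document; each statement's English description precedes it below -/
import Mathlib

section
/- Let r be a positive integer, λ a real number, and w a positive integer. For each real parameter μ and real y, let (B_{n,μ}^{(r)}(y))_{n≥0} be the higher-order degenerate Bernoulli polynomial values, i.e. the reals determined by (Σ_{n≥0} B_{n,μ}^{(r)}(y) tⁿ/n!)·(exp(L_μ(t)) − 1)^r = L_μ(t)^r·exp(y·L_μ(t)) in ℝ[[t]]. Then for every n ≥ 0 and every real x, B_{n,λ}^{(r)}(wx) = w^{n−r} · Σ_{j₁,…,j_r=0}^{w−1} B_{n,λ/w}^{(r)}(x + (j₁+⋯+j_r)/w). -/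
/-- `L_λ(t) = Σ_{k≥1} (-1)^(k-1) λ^(k-1) t^k / k`, the formal series of `(1/λ)log(1+λt)`. -/
noncomputable def Lser (lam : ℝ) : PowerSeries ℝ :=
  PowerSeries.mk fun k => if k = 0 then 0 else (-1) ^ (k - 1) * lam ^ (k - 1) / k

/-- The formal exponential `Σ_{m≥0} S^m/m!` of a power series `S` with zero constant term;
since `coeff n (S^m) = 0` for `m > n`, each coefficient is the finite sum below. -/
noncomputable def expPS (S : PowerSeries ℝ) : PowerSeries ℝ :=
  PowerSeries.mk fun n =>
    ∑ m ∈ Finset.range (n + 1), (PowerSeries.coeff n (S ^ m)) / m.factorial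

open PowerSeries Finset

lemma coeff_pow_zero_of_lt {S : PowerSeries ℝ} (hS : constantCoeff S = 0) :
    ∀ {i n : ℕ}, n < i → coeff n (S ^ i) = 0 := by
  intro i
  induction i with
  | zero => intro n h; omega
  | succ i ih =>
    intro n h
    rw [pow_succ', coeff_mul]
    apply Finset.sum_eq_zero
    rintro ⟨p, q⟩ hpq
    rw [Finset.HasAntidiagonal.mem_antidiagonal] at hpq
    rcases Nat.eq_zero_or_pos p with hp | hp
    · subst hp
      simp only [coeff_zero_eq_constantCoeff, hS, zero_mul]
    · have hq : q < i := by omega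
      rw [ih hq, mul_zero]

lemma coeff_expPS (S : PowerSeries ℝ) (n : ℕ) :
    coeff n (expPS S) = ∑ m ∈ Finset.range (n + 1), coeff n (S ^ m) / m.factorial := by
  simp [expPS]

lemma coeff_expPS' {S : PowerSeries ℝ} (hS : constantCoeff S = 0) {n N : ℕ} (h : n < N) :
    coeff n (expPS S) = ∑ m ∈ Finset.range N, coeff n (S ^ m) / m.factorial := by
  rw [coeff_expPS]
  apply Finset.sum_subset
  · exact Finset.range_subset_range.2 (by omega)
  · intro m _ hm
    rw [Finset.mem_range, not_lt] at hm
    rw [coeff_pow_zero_of_lt hS (by omega), zero_div]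

lemma coeff_C_mul_pow (a : ℝ) (S : PowerSeries ℝ) (m n : ℕ) :
    coeff n ((PowerSeries.C a * S) ^ m) = a ^ m * coeff n (S ^ m) := by
  rw [mul_pow, ← map_pow, coeff_C_mul]

lemma triangle_sum (N : ℕ) (F : ℕ → ℕ → ℝ) (hF : ∀ i j, N < i + j → F i j = 0) :
    ∑ i ∈ Finset.range (N + 1), ∑ j ∈ Finset.range (N + 1), F i j
      = ∑ m ∈ Finset.range (N + 1), ∑ i ∈ Finset.range (m + 1), F i (m - i) := by
  have h1 : ∀ m, ∑ i ∈ Finset.range (m + 1), F i (m - i)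
      = ∑ p ∈ Finset.HasAntidiagonal.antidiagonal m, F p.1 p.2 := by
    intro m
    rw [Finset.Nat.sum_antidiagonal_eq_sum_range_succ_mk]
  simp only [h1]
  rw [← Finset.sum_biUnion (by
    intro a _ b _ hab
    simp only [Finset.disjoint_left]
    rintro ⟨p, q⟩ hp hq
    rw [Finset.HasAntidiagonal.mem_antidiagonal] at hp hq
    exact hab (by omega))]
  rw [← Finset.sum_product']
  symm
  apply Finset.sum_subset
  · rintro ⟨p, q⟩ hp
    simp only [Finset.mem_biUnion, Finset.HasAntidiagonal.mem_antidiagonal, Finset.mem_range] at hp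
    obtain ⟨m, hm, hpq⟩ := hp
    simp only [Finset.mem_product, Finset.mem_range]
    omega
  · rintro ⟨p, q⟩ _ hnp
    simp only [Finset.mem_biUnion, Finset.HasAntidiagonal.mem_antidiagonal, Finset.mem_range] at hnp
    have : N < p + q := by
      by_contra h
      exact hnp ⟨p + q, by omega, rfl⟩
    exact hF p q this

lemma expPS_C_mul_add {S : PowerSeries ℝ} (hS : constantCoeff S = 0) (a b : ℝ) :
    expPS (PowerSeries.C a * S) * expPS (PowerSeries.C b * S)
      = expPS (PowerSeries.C (a + b) * S) := by
  ext n
  have hCS : ∀ c : ℝ, constantCoeff (PowerSeries.C c * S) = 0 := by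
    intro c; simp [hS]
  have hco : ∀ (c : ℝ) (p : ℕ), p ≤ n → coeff p (expPS (PowerSeries.C c * S))
      = ∑ i ∈ Finset.range (n + 1), c ^ i * coeff p (S ^ i) / i.factorial := by
    intro c p hp
    rw [coeff_expPS' (hCS c) (by omega : p < n + 1)]
    exact Finset.sum_congr rfl fun i _ => by rw [coeff_C_mul_pow]
  rw [coeff_mul]
  calc
    ∑ pq ∈ Finset.HasAntidiagonal.antidiagonal n,
        coeff pq.1 (expPS (PowerSeries.C a * S)) * coeff pq.2 (expPS (PowerSeries.C b * S))
        = ∑ pq ∈ Finset.HasAntidiagonal.antidiagonal n, ∑ i ∈ Finset.range (n + 1), ∑ j ∈ Finset.range (n + 1),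
            (a ^ i * b ^ j / (i.factorial * j.factorial))
              * (coeff pq.1 (S ^ i) * coeff pq.2 (S ^ j)) := by
      refine Finset.sum_congr rfl ?_
      rintro ⟨p, q⟩ hpq
      rw [Finset.HasAntidiagonal.mem_antidiagonal] at hpq
      dsimp only
      rw [hco a p (by omega), hco b q (by omega), Finset.sum_mul_sum]
      refine Finset.sum_congr rfl fun i _ => Finset.sum_congr rfl fun j _ => ?_
      field_simp
    _ = ∑ i ∈ Finset.range (n + 1), ∑ j ∈ Finset.range (n + 1),
            (a ^ i * b ^ j / (i.factorial * j.factorial)) * coeff n (S ^ (i + j)) := by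
      rw [Finset.sum_comm]
      refine Finset.sum_congr rfl fun i _ => ?_
      rw [Finset.sum_comm]
      refine Finset.sum_congr rfl fun j _ => ?_
      rw [← Finset.mul_sum, ← coeff_mul, ← pow_add]
    _ = coeff n (expPS (PowerSeries.C (a + b) * S)) := by
      rw [coeff_expPS,
        triangle_sum n (fun i j => (a ^ i * b ^ j / (i.factorial * j.factorial))
            * coeff n (S ^ (i + j)))
          (fun i j h => by
            simp only [coeff_pow_zero_of_lt hS (show n < i + j by omega), mul_zero])]
      refine Finset.sum_congr rfl fun m hm => ?_
      rw [coeff_C_mul_pow, add_pow, Finset.sum_mul, Finset.sum_div]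
      refine Finset.sum_congr rfl fun i hi => ?_
      rw [Finset.mem_range] at hi
      have hle : i ≤ m := by omega
      have hfac : ((m.choose i : ℝ)) * i.factorial * (m - i).factorial = m.factorial := by
        exact_mod_cast congrArg (Nat.cast : ℕ → ℝ)
          (Nat.choose_mul_factorial_mul_factorial hle)
      have h1 : i + (m - i) = m := by omega
      rw [h1]
      have h4 : (m.factorial : ℝ) ≠ 0 := Nat.cast_ne_zero.2 m.factorial_ne_zero
      have hpos : (0:ℝ) < (i.factorial : ℝ) * (m - i).factorial := by positivity
      rw [div_mul_eq_mul_div, div_eq_div_iff (ne_of_gt hpos) h4]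
      linear_combination (-(a ^ i * b ^ (m - i) * coeff n (S ^ m))) * hfac

lemma expPS_zero : expPS (0 : PowerSeries ℝ) = 1 := by
  ext n
  rw [coeff_expPS]
  rw [Finset.sum_eq_single_of_mem 0 (Finset.mem_range.2 (by omega))
    (fun m _ hm => by rw [zero_pow hm, map_zero, zero_div])]
  simp

lemma expPS_C_nat {S : PowerSeries ℝ} (hS : constantCoeff S = 0) (k : ℕ) :
    expPS (PowerSeries.C (k : ℝ) * S) = expPS S ^ k := by
  induction k with
  | zero => simpa using expPS_zero
  | succ k ih =>
    have h := expPS_C_mul_add hS (k : ℝ) 1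
    rw [map_one, one_mul] at h
    push_cast
    rw [← h, ih, pow_succ]

lemma expPS_C_sum {S : PowerSeries ℝ} (hS : constantCoeff S = 0)
    {ι : Type*} (t : Finset ι) (f : ι → ℝ) :
    expPS (PowerSeries.C (∑ l ∈ t, f l) * S) = ∏ l ∈ t, expPS (PowerSeries.C (f l) * S) := by
  induction t using Finset.cons_induction with
  | empty => simpa using expPS_zero
  | cons a t ha ih =>
    rw [Finset.sum_cons, Finset.prod_cons, ← ih, ← expPS_C_mul_add hS]

lemma rescale_C' (c a : ℝ) :
    PowerSeries.rescale c (PowerSeries.C a) = PowerSeries.C a := by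
  ext k
  rw [PowerSeries.coeff_rescale, PowerSeries.coeff_C]
  split_ifs with h
  · subst h; simp
  · simp

lemma rescale_expPS (c : ℝ) (S : PowerSeries ℝ) :
    PowerSeries.rescale c (expPS S) = expPS (PowerSeries.rescale c S) := by
  ext n
  rw [coeff_rescale, coeff_expPS, coeff_expPS, Finset.mul_sum]
  refine Finset.sum_congr rfl fun m _ => ?_
  rw [← map_pow, coeff_rescale, mul_div_assoc]

lemma constantCoeff_Lser (lam : ℝ) : constantCoeff (Lser lam) = 0 := by
  rw [← coeff_zero_eq_constantCoeff]
  simp [Lser]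

lemma rescale_Lser (lam : ℝ) {w : ℝ} (hw : w ≠ 0) :
    PowerSeries.rescale w (Lser (lam / w)) = PowerSeries.C w * Lser lam := by
  ext k
  rw [coeff_rescale, coeff_C_mul]
  simp only [Lser, coeff_mk]
  rcases Nat.eq_zero_or_pos k with rfl | hk
  · simp
  · obtain ⟨k', rfl⟩ : ∃ k', k = k' + 1 := ⟨k - 1, by omega⟩
    rw [if_neg (by omega), if_neg (by omega)]
    simp only [Nat.add_sub_cancel]
    rw [pow_succ, div_pow]
    have h1 : w ^ k' ≠ 0 := pow_ne_zero _ hw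
    have h2 : ((k' + 1 : ℕ) : ℝ) ≠ 0 := Nat.cast_ne_zero.2 (by omega)
    field_simp

theorem higher_degenerate_bernoulli_multiplication (r : ℕ) (hr : 0 < r) (lam : ℝ)
    (w : ℕ) (hw : 0 < w) (B : ℝ → ℝ → ℕ → ℝ)
    (hB : ∀ μ y : ℝ,
      (PowerSeries.mk fun n => B μ y n / n.factorial) * (expPS (Lser μ) - 1) ^ r =
        Lser μ ^ r * expPS (PowerSeries.C y * Lser μ)) :
    ∀ (n : ℕ) (x : ℝ),
      B lam ((w : ℝ) * x) n =
        (w : ℝ) ^ ((n : ℤ) - r) *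
          ∑ j : Fin r → Fin w, B (lam / w) (x + (∑ l, ((j l : ℕ) : ℝ)) / w) n := by
  intro n x
  have hw0 : (w : ℝ) ≠ 0 := Nat.cast_ne_zero.2 hw.ne'
  set μ : ℝ := lam / (w : ℝ) with hμ
  have hcμ : constantCoeff (Lser μ) = 0 := constantCoeff_Lser μ
  have hcl : constantCoeff (Lser lam) = 0 := constantCoeff_Lser lam
  set E := expPS (Lser lam) with hE
  -- Step 1: sum the defining identities over j.
  have key : (∑ j : Fin r → Fin w,
        (PowerSeries.mk fun m => B μ (x + (∑ l, ((j l : ℕ) : ℝ)) / w) m / m.factorial))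
      * (expPS (Lser μ) - 1) ^ r
      = Lser μ ^ r * expPS (PowerSeries.C x * Lser μ)
          * (∑ j : Fin w, expPS (PowerSeries.C (((j : ℕ) : ℝ) / w) * Lser μ)) ^ r := by
    rw [Finset.sum_mul]
    have hterm : ∀ j : Fin r → Fin w,
        (PowerSeries.mk fun m => B μ (x + (∑ l, ((j l : ℕ) : ℝ)) / w) m / m.factorial)
            * (expPS (Lser μ) - 1) ^ r
          = Lser μ ^ r * expPS (PowerSeries.C x * Lser μ)
              * ∏ l, expPS (PowerSeries.C (((j l : ℕ) : ℝ) / w) * Lser μ) := by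
      intro j
      rw [hB μ (x + (∑ l, ((j l : ℕ) : ℝ)) / w)]
      have : expPS (PowerSeries.C (x + (∑ l, ((j l : ℕ) : ℝ)) / w) * Lser μ)
          = expPS (PowerSeries.C x * Lser μ)
              * ∏ l, expPS (PowerSeries.C (((j l : ℕ) : ℝ) / w) * Lser μ) := by
        rw [← expPS_C_mul_add hcμ x ((∑ l, ((j l : ℕ) : ℝ)) / w)]
        congr 1
        rw [Finset.sum_div, expPS_C_sum hcμ]
      rw [this, mul_assoc]
    rw [Finset.sum_congr rfl fun j _ => hterm j, ← Finset.mul_sum]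
    congr 1
    rw [show (∑ j : Fin w, expPS (PowerSeries.C (((j : ℕ) : ℝ) / w) * Lser μ)) ^ r
        = ∏ _l : Fin r, ∑ j : Fin w, expPS (PowerSeries.C (((j : ℕ) : ℝ) / w) * Lser μ) from by
      rw [Finset.prod_const, Finset.card_univ, Fintype.card_fin]]
    rw [Finset.prod_univ_sum, Fintype.piFinset_univ]
  -- Step 2: rescale by w.
  have hres : PowerSeries.rescale (w : ℝ) (Lser μ) = PowerSeries.C (w : ℝ) * Lser lam :=
    rescale_Lser lam hw0
  have hFw : PowerSeries.rescale (w : ℝ) (expPS (Lser μ)) = E ^ w := by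
    rw [rescale_expPS, hres, expPS_C_nat hcl]
  have hEx : PowerSeries.rescale (w : ℝ) (expPS (PowerSeries.C x * Lser μ))
      = expPS (PowerSeries.C ((w : ℝ) * x) * Lser lam) := by
    rw [rescale_expPS, map_mul, rescale_C', hres, ← mul_assoc, ← map_mul, mul_comm x]
  have hEj : ∀ j : Fin w, PowerSeries.rescale (w : ℝ)
        (expPS (PowerSeries.C (((j : ℕ) : ℝ) / w) * Lser μ)) = E ^ (j : ℕ) := by
    intro j
    rw [rescale_expPS, map_mul, rescale_C', hres, ← mul_assoc, ← map_mul,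
      div_mul_cancel₀ _ hw0, expPS_C_nat hcl]
  have key2 := congrArg (PowerSeries.rescale (w : ℝ)) key
  simp only [map_mul, map_pow, map_sub, map_one, map_sum, hFw, hEx, hres, hEj] at key2
  -- Step 3: substitute the defining identity for B lam (w*x).
  have hgeom : (∑ j : Fin w, E ^ (j : ℕ)) * (E - 1) = E ^ w - 1 := by
    rw [Fin.sum_univ_eq_sum_range (fun i => E ^ i) w, geom_sum_mul]
  have hBtop := hB lam ((w : ℝ) * x)
  rw [show PowerSeries.C ((w : ℝ) * x) = PowerSeries.C (w : ℝ) * PowerSeries.C x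
    from map_mul _ _ _] at hBtop
  have key3 : (∑ j : Fin r → Fin w, PowerSeries.rescale (w : ℝ)
        (PowerSeries.mk fun m => B μ (x + (∑ l, ((j l : ℕ) : ℝ)) / w) m / m.factorial))
      * (E ^ w - 1) ^ r
      = (PowerSeries.C ((w : ℝ) ^ r)
          * (PowerSeries.mk fun m => B lam ((w : ℝ) * x) m / m.factorial))
          * (E ^ w - 1) ^ r := by
    rw [key2]
    rw [mul_pow (PowerSeries.C (w : ℝ)) (Lser lam) r, ← map_pow]
    calc PowerSeries.C ((w : ℝ) ^ r) * Lser lam ^ r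
          * expPS (PowerSeries.C (w : ℝ) * PowerSeries.C x * Lser lam)
          * (∑ j : Fin w, E ^ (j : ℕ)) ^ r
        = PowerSeries.C ((w : ℝ) ^ r)
            * ((PowerSeries.mk fun m => B lam ((w : ℝ) * x) m / m.factorial) * (E - 1) ^ r)
            * (∑ j : Fin w, E ^ (j : ℕ)) ^ r := by
          rw [mul_assoc (PowerSeries.C ((w : ℝ) ^ r)), hBtop]
      _ = (PowerSeries.C ((w : ℝ) ^ r)
            * (PowerSeries.mk fun m => B lam ((w : ℝ) * x) m / m.factorial))
            * ((∑ j : Fin w, E ^ (j : ℕ)) * (E - 1)) ^ r := by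
          rw [mul_pow]; ring
      _ = _ := by rw [hgeom]
  -- Step 4: cancel (E^w - 1)^r.
  have hEw1 : (E ^ w - 1 : PowerSeries ℝ) ≠ 0 := by
    intro h0
    have h1 : coeff 1 (E ^ w - 1) = (w : ℝ) := by
      rw [map_sub, ← expPS_C_nat hcl, coeff_expPS,
        Finset.sum_range_succ, Finset.sum_range_succ, Finset.sum_range_zero,
        pow_zero, pow_one, coeff_C_mul]
      simp [Lser, PowerSeries.coeff_one]
    rw [h0, map_zero] at h1
    exact hw0 h1.symm
  have key4 := mul_right_cancel₀ (pow_ne_zero r hEw1) key3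
  -- Step 5: compare coefficients of t^n.
  have hfin := congrArg (coeff n) key4
  rw [map_sum, coeff_C_mul, coeff_mk] at hfin
  have hL : ∀ j : Fin r → Fin w, coeff n (PowerSeries.rescale (w : ℝ)
      (PowerSeries.mk fun m => B μ (x + (∑ l, ((j l : ℕ) : ℝ)) / w) m / m.factorial))
      = (w : ℝ) ^ n * (B μ (x + (∑ l, ((j l : ℕ) : ℝ)) / w) n / n.factorial) := by
    intro j
    rw [coeff_rescale, coeff_mk]
  rw [Finset.sum_congr rfl fun j _ => hL j, ← Finset.mul_sum, ← Finset.sum_div] at hfin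
  have hfact : (n.factorial : ℝ) ≠ 0 := Nat.cast_ne_zero.2 n.factorial_ne_zero
  have hwr : (w : ℝ) ^ r ≠ 0 := pow_ne_zero _ hw0
  have hz : (w : ℝ) ^ ((n : ℤ) - r) = (w : ℝ) ^ n / (w : ℝ) ^ r := by
    rw [zpow_sub₀ hw0, zpow_natCast, zpow_natCast]
  rw [hz, hμ] at *
  field_simp at hfin ⊢
  linarith [hfin]
end

section
/- Let r be a positive integer, λ a real number, and x a real number. Let (B_{n,λ}^{(r)}(x))_{n≥0} be the higher-order degenerate Bernoulli polynomial values, determined by (Σ_{n≥0} B_{n,λ}^{(r)}(x) tⁿ/n!)·(exp(L_λ(t)) − 1)^r = L_λ(t)^r·exp(x·L_λ(t)) in ℝ[[t]], and let (B_n^{(r)}(x))_{n≥0} be the (non-degenerate) higher-order Bernoulli polynomial values, determined by (Σ_{n≥0} B_n^{(r)}(x) tⁿ/n!)·(exp(t) − 1)^r = t^r·exp(xt) in ℝ[[t]]. Then for every n ≥ 0, B_{n,λ}^{(r)}(x) = Σ_{l=0}^n s(n,l) λ^{n−l} B_l^{(r)}(x), where s(n,l) are the signed Stirling numbers of the first kind.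 -/
/-- The signed Stirling numbers of the first kind, defined as the coefficients of the
descending Pochhammer polynomial `X(X-1)⋯(X-n+1)`. -/
noncomputable def stirlingFirst (n l : ℕ) : ℤ := (descPochhammer ℤ n).coeff l

open PowerSeries Finset

lemma coeff_Lser_one (lam : ℝ) : coeff 1 (Lser lam) = 1 := by
  simp [Lser]

lemma coeff_Lser_pow_eq_zero (lam : ℝ) {n l : ℕ} (h : n < l) :
    coeff n (Lser lam ^ l) = 0 := by
  obtain ⟨q, hq⟩ : (X : PowerSeries ℝ) ^ l ∣ Lser lam ^ l :=
    pow_dvd_pow_of_dvd (X_dvd_iff.2 (constantCoeff_Lser lam)) l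
  rw [hq, coeff_X_pow_mul', if_neg (by omega)]

lemma stirling_zero_right (l : ℕ) : stirlingFirst 0 l = if l = 0 then 1 else 0 := by
  simp [stirlingFirst, descPochhammer_zero, Polynomial.coeff_one]

lemma stirling_rec (n l : ℕ) :
    stirlingFirst (n + 1) (l + 1) = stirlingFirst n l - n * stirlingFirst n (l + 1) := by
  simp [stirlingFirst, descPochhammer_succ_right, mul_sub, Polynomial.coeff_mul_X, sub_mul,
    mul_comm]

lemma stirling_rec_zero (n : ℕ) :
    stirlingFirst (n + 1) 0 = - (n * stirlingFirst n 0) := by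
  simp [stirlingFirst, descPochhammer_succ_right, mul_sub, mul_comm]

lemma deriv_Lser (lam : ℝ) :
    (PowerSeries.derivative ℝ) (Lser lam) = PowerSeries.mk fun k => (-lam) ^ k := by
  ext n
  rw [coeff_derivative]
  simp only [Lser, coeff_mk, Nat.succ_ne_zero, if_false, Nat.add_sub_cancel]
  field_simp
  push_cast
  ring

lemma one_add_mul_deriv (lam : ℝ) :
    (1 + PowerSeries.C lam * PowerSeries.X) * (PowerSeries.derivative ℝ) (Lser lam) = 1 := by
  rw [deriv_Lser, add_mul, one_mul, mul_assoc]
  ext n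
  cases n with
  | zero => simp
  | succ n =>
    rw [map_add, coeff_C_mul, coeff_succ_X_mul, coeff_one]
    simp [pow_succ]
    ring

lemma rec_coeff (lam : ℝ) (l n : ℕ) :
    (n + 1 : ℝ) * PowerSeries.coeff (n+1) (Lser lam ^ (l+1))
      + lam * n * PowerSeries.coeff n (Lser lam ^ (l+1))
      = (l + 1 : ℝ) * PowerSeries.coeff n (Lser lam ^ l) := by
  have hid : (1 + PowerSeries.C lam * PowerSeries.X) *
        (PowerSeries.derivative ℝ) (Lser lam ^ (l+1)) = (l+1 : ℕ) • (Lser lam ^ l) := by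
    rw [Derivation.leibniz_pow, Nat.add_sub_cancel, smul_eq_mul, mul_smul_comm]
    congr 1
    calc (1 + PowerSeries.C lam * PowerSeries.X) *
          (Lser lam ^ l * (PowerSeries.derivative ℝ) (Lser lam))
        = Lser lam ^ l * ((1 + PowerSeries.C lam * PowerSeries.X) *
            (PowerSeries.derivative ℝ) (Lser lam)) := by ring
      _ = Lser lam ^ l := by rw [one_add_mul_deriv]; ring
  have h := congrArg (PowerSeries.coeff n) hid
  rw [add_mul, one_mul, map_add, mul_assoc, coeff_C_mul, map_nsmul, nsmul_eq_mul,
    coeff_derivative] at h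
  push_cast at h
  cases n with
  | zero =>
    rw [coeff_zero_X_mul] at h
    push_cast
    rw [mul_zero, zero_mul, add_zero]
    norm_num at h ⊢
    linarith [h]
  | succ m =>
    rw [coeff_succ_X_mul, coeff_derivative] at h
    push_cast at h ⊢
    linarith [h]

lemma stirling_eq_zero {n l : ℕ} (h : n < l) : stirlingFirst n l = 0 :=
  Polynomial.coeff_eq_zero_of_natDegree_lt (by rwa [descPochhammer_natDegree])

lemma stirling_pos_zero {n : ℕ} (h : n ≠ 0) : stirlingFirst n 0 = 0 := by
  rw [stirlingFirst, Polynomial.coeff_zero_eq_eval_zero, descPochhammer_eval_zero, if_neg h]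

lemma coeff_Lser_pow (lam : ℝ) : ∀ n l : ℕ,
    (n.factorial : ℝ) * PowerSeries.coeff n (Lser lam ^ l)
      = (stirlingFirst n l : ℝ) * lam ^ (n - l) * l.factorial := by
  intro n
  induction n with
  | zero =>
    intro l
    rw [PowerSeries.coeff_zero_eq_constantCoeff, map_pow, constantCoeff_Lser,
      stirling_zero_right]
    cases l with
    | zero => simp
    | succ l => simp [Nat.succ_ne_zero]
  | succ n ih =>
    intro l
    cases l with
    | zero =>
      rw [pow_zero, PowerSeries.coeff_one, if_neg (Nat.succ_ne_zero n),
        stirling_pos_zero (Nat.succ_ne_zero n)]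
      simp
    | succ l =>
      have h := rec_coeff lam l n
      have ihl := ih l
      have ihl1 := ih (l + 1)
      rw [stirling_rec]
      have hnl : (n + 1) - (l + 1) = n - l := by omega
      rw [hnl]
      rw [Nat.factorial_succ n, Nat.factorial_succ l] at *
      push_cast at *
      rcases le_or_gt (l + 1) n with hle | hlt
      · have hp : lam ^ (n - l) = lam * lam ^ (n - (l + 1)) := by
          rw [← pow_succ']
          congr 1
          omega
        linear_combination (n.factorial : ℝ) * h + ((l : ℝ) + 1) * ihl - lam * n * ihl1 +
          (n : ℝ) * (stirlingFirst n (l + 1) : ℝ) * ((l : ℝ) + 1) * (l.factorial : ℝ) * hp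
      · have hb : stirlingFirst n (l + 1) = 0 := stirling_eq_zero hlt
        rw [hb] at ihl1 ⊢
        push_cast at ihl1 ⊢
        linear_combination (n.factorial : ℝ) * h + ((l : ℝ) + 1) * ihl - lam * n * ihl1

noncomputable def compL (lam : ℝ) (F : PowerSeries ℝ) : PowerSeries ℝ :=
  PowerSeries.mk fun n =>
    ∑ d ∈ Finset.range (n + 1), PowerSeries.coeff d F * PowerSeries.coeff n (Lser lam ^ d)

lemma coeff_compL (lam : ℝ) (F : PowerSeries ℝ) (n : ℕ) :
    PowerSeries.coeff n (compL lam F)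
      = ∑ d ∈ Finset.range (n + 1),
          PowerSeries.coeff d F * PowerSeries.coeff n (Lser lam ^ d) := by
  simp [compL]

lemma sum_range_antidiagonal (n : ℕ) (g : ℕ → ℕ → ℝ)
    (hg : ∀ i j, n < i + j → g i j = 0) :
    ∑ d ∈ Finset.range (n + 1), ∑ p ∈ Finset.HasAntidiagonal.antidiagonal d, g p.1 p.2
      = ∑ i ∈ Finset.range (n + 1), ∑ j ∈ Finset.range (n + 1), g i j := by
  rw [← Finset.sum_product']
  rw [← Finset.sum_biUnion]
  · apply Finset.sum_subset
    · intro p hp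
      simp only [Finset.mem_biUnion, Finset.mem_range, Finset.HasAntidiagonal.mem_antidiagonal] at hp
      obtain ⟨d, hd, hpd⟩ := hp
      simp only [Finset.mem_product, Finset.mem_range]
      omega
    · intro p hp hnp
      apply hg
      by_contra hc
      push_neg at hc
      exact hnp (Finset.mem_biUnion.2 ⟨p.1 + p.2, Finset.mem_range.2 (by omega),
        Finset.HasAntidiagonal.mem_antidiagonal.2 rfl⟩)
  · intro a ha b hb hab
    apply Finset.disjoint_left.2
    intro p hpa hpb
    rw [Finset.HasAntidiagonal.mem_antidiagonal] at hpa hpb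
    exact hab (hpa ▸ hpb ▸ rfl)

lemma compL_mul (lam : ℝ) (F G : PowerSeries ℝ) :
    compL lam (F * G) = compL lam F * compL lam G := by
  ext n
  rw [PowerSeries.coeff_mul, coeff_compL]
  have key : ∀ p : ℕ × ℕ, p ∈ Finset.HasAntidiagonal.antidiagonal n →
      PowerSeries.coeff p.1 (compL lam F) * PowerSeries.coeff p.2 (compL lam G)
        = ∑ i ∈ Finset.range (n + 1), ∑ j ∈ Finset.range (n + 1),
            (PowerSeries.coeff i F * PowerSeries.coeff p.1 (Lser lam ^ i)) *
            (PowerSeries.coeff j G * PowerSeries.coeff p.2 (Lser lam ^ j)) := by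
    intro p hp
    rw [Finset.HasAntidiagonal.mem_antidiagonal] at hp
    rw [coeff_compL, coeff_compL, Finset.sum_mul_sum]
    rw [Finset.sum_subset (Finset.range_subset_range.2 (by omega : p.1 + 1 ≤ n + 1))
      (fun i _ hi => by
        have hpi : p.1 < i := by simp only [Finset.mem_range] at hi; omega
        simp [coeff_Lser_pow_eq_zero lam hpi])]
    refine Finset.sum_congr rfl fun i _ => ?_
    rw [Finset.sum_subset (Finset.range_subset_range.2 (by omega : p.2 + 1 ≤ n + 1))
      (fun j _ hj => by
        have hpj : p.2 < j := by simp only [Finset.mem_range] at hj; omega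
        simp [coeff_Lser_pow_eq_zero lam hpj])]
  rw [Finset.sum_congr rfl key, Finset.sum_comm]
  have key2 : ∀ i ∈ Finset.range (n + 1),
      ∑ p ∈ Finset.HasAntidiagonal.antidiagonal n, ∑ j ∈ Finset.range (n + 1),
          (PowerSeries.coeff i F * PowerSeries.coeff p.1 (Lser lam ^ i)) *
          (PowerSeries.coeff j G * PowerSeries.coeff p.2 (Lser lam ^ j))
        = ∑ j ∈ Finset.range (n + 1),
            PowerSeries.coeff i F * PowerSeries.coeff j G *
              PowerSeries.coeff n (Lser lam ^ (i + j)) := by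
    intro i _
    rw [Finset.sum_comm]
    refine Finset.sum_congr rfl fun j _ => ?_
    rw [pow_add, PowerSeries.coeff_mul, Finset.mul_sum]
    refine Finset.sum_congr rfl fun p _ => by ring
  rw [Finset.sum_congr rfl key2]
  rw [← sum_range_antidiagonal n
    (fun i j => PowerSeries.coeff i F * PowerSeries.coeff j G *
      PowerSeries.coeff n (Lser lam ^ (i + j)))
    (fun i j hij => by simp [coeff_Lser_pow_eq_zero lam hij])]
  refine Finset.sum_congr rfl fun d hd => ?_
  rw [PowerSeries.coeff_mul, Finset.sum_mul]
  refine Finset.sum_congr rfl fun p hp => ?_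
  rw [Finset.HasAntidiagonal.mem_antidiagonal] at hp
  rw [hp]

lemma compL_one (lam : ℝ) : compL lam 1 = 1 := by
  ext n
  rw [coeff_compL]
  rw [Finset.sum_eq_single 0 (fun d _ hd => by
      rw [PowerSeries.coeff_one, if_neg hd, zero_mul])
    (fun h => absurd (Finset.mem_range.2 (Nat.succ_pos n)) h)]
  simp

lemma compL_sub (lam : ℝ) (F G : PowerSeries ℝ) :
    compL lam (F - G) = compL lam F - compL lam G := by
  ext n
  simp [coeff_compL, sub_mul, Finset.sum_sub_distrib]

lemma compL_pow (lam : ℝ) (F : PowerSeries ℝ) (r : ℕ) :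
    compL lam (F ^ r) = compL lam F ^ r := by
  induction r with
  | zero => simpa using compL_one lam
  | succ r ih => rw [pow_succ, pow_succ, compL_mul, ih]

lemma compL_X (lam : ℝ) : compL lam PowerSeries.X = Lser lam := by
  ext n
  rw [coeff_compL]
  cases n with
  | zero =>
    simp [Finset.sum_range_one, Lser]
  | succ m =>
    rw [Finset.sum_eq_single 1 (fun d _ hd => by
        rw [PowerSeries.coeff_X, if_neg hd, zero_mul])
      (fun h => absurd (Finset.mem_range.2 (by omega)) h)]
    simp

lemma compL_exp (lam : ℝ) : compL lam (PowerSeries.exp ℝ) = expPS (Lser lam) := by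
  ext n
  rw [coeff_compL, expPS, PowerSeries.coeff_mk]
  refine Finset.sum_congr rfl fun d _ => ?_
  rw [PowerSeries.coeff_exp]
  simp [div_eq_mul_inv, mul_comm]

lemma compL_expx (lam x : ℝ) :
    compL lam (PowerSeries.mk fun n => x ^ n / n.factorial)
      = expPS (PowerSeries.C x * Lser lam) := by
  ext n
  rw [coeff_compL, expPS, PowerSeries.coeff_mk]
  refine Finset.sum_congr rfl fun d _ => ?_
  rw [PowerSeries.coeff_mk, mul_pow, ← map_pow, coeff_C_mul]
  ring

lemma expPS_sub_one_ne_zero (lam : ℝ) : expPS (Lser lam) - 1 ≠ 0 := by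
  intro h0
  have h1 := congrArg (PowerSeries.coeff 1) h0
  rw [map_sub, PowerSeries.coeff_one, expPS, PowerSeries.coeff_mk] at h1
  simp [Finset.sum_range_succ, coeff_Lser_one] at h1

theorem higher_degenerate_bernoulli_eq_sum_stirling (r : ℕ) (hr : 0 < r) (lam x : ℝ)
    (Bd B : ℕ → ℝ)
    (hBd : (PowerSeries.mk fun n => Bd n / n.factorial) * (expPS (Lser lam) - 1) ^ r =
      Lser lam ^ r * expPS (PowerSeries.C x * Lser lam))
    (hB : (PowerSeries.mk fun n => B n / n.factorial) * (PowerSeries.exp ℝ - 1) ^ r =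
      PowerSeries.X ^ r * PowerSeries.mk fun n => x ^ n / n.factorial) :
    ∀ n : ℕ, Bd n =
      ∑ l ∈ Finset.range (n + 1), (stirlingFirst n l : ℝ) * lam ^ (n - l) * B l := by
  have h2 : (PowerSeries.mk fun n => Bd n / n.factorial)
      = compL lam (PowerSeries.mk fun n => B n / n.factorial) := by
    have hc := congrArg (compL lam) hB
    rw [compL_mul, compL_pow, compL_sub, compL_exp, compL_one, compL_mul, compL_pow,
      compL_X, compL_expx] at hc
    exact mul_right_cancel₀ (pow_ne_zero r (expPS_sub_one_ne_zero lam)) (by rw [hBd, ← hc])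
  intro n
  have h3 := congrArg (PowerSeries.coeff n) h2
  rw [PowerSeries.coeff_mk, coeff_compL] at h3
  simp only [PowerSeries.coeff_mk] at h3
  have hnf : (n.factorial : ℝ) ≠ 0 := Nat.cast_ne_zero.2 n.factorial_ne_zero
  have h4 : Bd n = (∑ l ∈ Finset.range (n + 1),
      B l / l.factorial * PowerSeries.coeff n (Lser lam ^ l)) * n.factorial := by
    rw [← h3]
    field_simp
  rw [h4, Finset.sum_mul]
  refine Finset.sum_congr rfl fun l _ => ?_
  have hlf : (l.factorial : ℝ) ≠ 0 := Nat.cast_ne_zero.2 l.factorial_ne_zero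
  have hk := coeff_Lser_pow lam n l
  field_simp
  linear_combination B l * hk
end
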